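/- (No-spillover part of the main eigenvalue embedding theorem.) Under the stated hypotheses, the matrices M̃_u := (M_u⁻¹ − X_{1u}Γ₁⁻¹X_{1u}ᵀ + X_{1u}ΘΓ̃₁⁻¹ΘᵀX_{1u}ᵀ)⁻¹ and K̃ := (K⁻¹ + X₁Λ₁Γ₁⁻¹X₁ᵀ − X₁ΘΛ̃₁Γ̃₁⁻¹ΘᵀX₁ᵀ)⁻¹, with M̃ := [[M̃_u, 0],[0, 0]] ∈ ℝ^{n×n}, satisfy M̃·X₂ + K̃·X₂·diag(Λ₃⁻¹, 0_{n_φ}) = 0; that is, the remaining n − p eigenvalues (including the infinite ones) and their eigenvectors X₂ of the original pencil λM + K are preserved unchanged by the updated pencil λM̃ + K̃. -/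

import Mathlib

open Matrix Polynomial

lemma scalar_eq_smul_one {n : ℕ} (r : ℂ) :
    Matrix.scalar (Fin n) r = r • (1 : Matrix (Fin n) (Fin n) ℂ) := by
  ext i j
  simp [Matrix.scalar_apply, Matrix.one_apply, Matrix.diagonal_apply, Matrix.smul_apply]

lemma charpoly_eval_eq {m : ℕ} (B : Matrix (Fin m) (Fin m) ℂ) (r : ℂ) :
    (B.charpoly).eval r = (r • 1 - B).det := by
  rw [Matrix.charpoly, _root_.eval_det, Matrix.matPolyEquiv_charmatrix]
  rw [Polynomial.eval_sub, Polynomial.eval_X, Polynomial.eval_C, scalar_eq_smul_one]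

lemma pow_mul_comm_of_sylvester {n m : ℕ} {A : Matrix (Fin n) (Fin n) ℂ}
    {B : Matrix (Fin m) (Fin m) ℂ} {W : Matrix (Fin n) (Fin m) ℂ}
    (h : A * W = W * B) (k : ℕ) : A ^ k * W = W * B ^ k := by
  induction k with
  | zero => simp
  | succ k ih =>
    rw [pow_succ, pow_succ, Matrix.mul_assoc, h, ← Matrix.mul_assoc, ih, Matrix.mul_assoc]

lemma aeval_mul_comm_of_sylvester {n m : ℕ} {A : Matrix (Fin n) (Fin n) ℂ}
    {B : Matrix (Fin m) (Fin m) ℂ} {W : Matrix (Fin n) (Fin m) ℂ}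
    (h : A * W = W * B) (q : ℂ[X]) :
    (Polynomial.aeval A q) * W = W * (Polynomial.aeval B q) := by
  induction q using Polynomial.induction_on' with
  | add p q hp hq => rw [map_add, map_add, Matrix.add_mul, Matrix.mul_add, hp, hq]
  | monomial k c =>
    simp only [Polynomial.aeval_monomial, Algebra.algebraMap_eq_smul_one,
      smul_mul_assoc, one_mul, mul_smul_comm]
    rw [Matrix.smul_mul, Matrix.mul_smul, pow_mul_comm_of_sylvester h k]

lemma isUnit_aeval_of_roots {n : ℕ} (A : Matrix (Fin n) (Fin n) ℂ) :
    ∀ d (q : ℂ[X]), q.natDegree = d → q.Monic →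
      (∀ μ : ℂ, q.IsRoot μ → (A - μ • 1).det ≠ 0) →
      IsUnit (Polynomial.aeval A q) := by
  intro d
  induction d with
  | zero =>
    intro q hd hm _
    rw [hm.natDegree_eq_zero.mp hd, _root_.map_one]
    exact isUnit_one
  | succ d ih =>
    intro q hd hm hroots
    have hdeg : 0 < q.degree := by
      rw [Polynomial.degree_eq_natDegree hm.ne_zero, hd]; exact_mod_cast Nat.succ_pos d
    obtain ⟨μ, hμ⟩ := Complex.exists_root hdeg
    obtain ⟨q₂, hq₂⟩ := (Polynomial.dvd_iff_isRoot.mpr hμ)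
    have hm₂ : q₂.Monic := (Polynomial.monic_X_sub_C μ).of_mul_monic_left (hq₂ ▸ hm)
    have hdeg₂ : q₂.natDegree = d := by
      have := hq₂ ▸ hd
      rw [Polynomial.natDegree_mul (Polynomial.X_sub_C_ne_zero μ) hm₂.ne_zero,
        Polynomial.natDegree_X_sub_C] at this
      omega
    have hroots₂ : ∀ ν : ℂ, q₂.IsRoot ν → (A - ν • 1).det ≠ 0 := by
      intro ν hν
      exact hroots ν (by simp [Polynomial.IsRoot, hq₂, hν.eq_zero])
    have hu₂ := ih q₂ hdeg₂ hm₂ hroots₂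
    have hfac : Polynomial.aeval A q = (A - μ • 1) * Polynomial.aeval A q₂ := by
      rw [hq₂, _root_.map_mul, _root_.map_sub, Polynomial.aeval_X, Polynomial.aeval_C,
        Algebra.algebraMap_eq_smul_one]
    have hu₁ : IsUnit (A - μ • 1) := by
      rw [Matrix.isUnit_iff_isUnit_det, isUnit_iff_ne_zero]
      exact hroots μ hμ
    rw [hfac]
    exact hu₁.mul hu₂

lemma sylvester_zero {n m : ℕ} (A : Matrix (Fin n) (Fin n) ℂ)
    (B : Matrix (Fin m) (Fin m) ℂ) (W : Matrix (Fin n) (Fin m) ℂ)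
    (hAW : A * W = W * B)
    (hdisj : ∀ μ : ℂ, (B - μ • 1).det = 0 → (A - μ • 1).det ≠ 0) : W = 0 := by
  have h0 : (Polynomial.aeval A B.charpoly) * W = 0 := by
    rw [aeval_mul_comm_of_sylvester hAW, Matrix.aeval_self_charpoly, Matrix.mul_zero]
  have hu : IsUnit (Polynomial.aeval A B.charpoly) := by
    refine isUnit_aeval_of_roots A _ _ rfl B.charpoly_monic ?_
    intro μ hμ
    refine hdisj μ ?_
    have h1 : (μ • 1 - B).det = 0 := by rw [← charpoly_eval_eq]; exact hμ.eq_zero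
    have h2 : B - μ • 1 = -(μ • 1 - B) := by rw [neg_sub]
    rw [h2, Matrix.det_neg, h1, mul_zero]
  calc W = (Polynomial.aeval A B.charpoly)⁻¹ * ((Polynomial.aeval A B.charpoly) * W) := by
        rw [Matrix.nonsing_inv_mul_cancel_left _ _ ((Matrix.isUnit_iff_isUnit_det _).mp hu)]
    _ = 0 := by rw [h0, Matrix.mul_zero]

-- real version, specialized shape: Λ₃ᵀ * V = V * Λ₁, disjoint spectra ⟹ V = 0
lemma sylvester_zero_real {q p : ℕ} (Λ₁ : Matrix (Fin p) (Fin p) ℝ)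
    (Λ₃ : Matrix (Fin q) (Fin q) ℝ)
    (hdisj : ¬ ∃ μ : ℂ,
      (Λ₁.map (Complex.ofReal) - μ • 1).det = 0 ∧
      (Λ₃.map (Complex.ofReal) - μ • 1).det = 0)
    (V : Matrix (Fin q) (Fin p) ℝ) (hV : Λ₃ᵀ * V = V * Λ₁) : V = 0 := by
  push_neg at hdisj
  have key : V.map (Complex.ofReal) = 0 := by
    apply sylvester_zero ((Λ₃.map (Complex.ofReal))ᵀ) (Λ₁.map (Complex.ofReal))
    · have hm2 : ∀ {a b c : ℕ} (P : Matrix (Fin a) (Fin b) ℝ) (Q : Matrix (Fin b) (Fin c) ℝ),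
          (P * Q).map Complex.ofReal = P.map Complex.ofReal * Q.map Complex.ofReal := by
        intros a b c P Q
        exact Matrix.map_mul (f := Complex.ofRealHom)
      rw [← Matrix.transpose_map, ← hm2, ← hm2, hV]
    · intro μ h1 h2
      apply hdisj μ h1
      have : (Λ₃.map (Complex.ofReal))ᵀ - μ • 1 = (Λ₃.map (Complex.ofReal) - μ • 1)ᵀ := by
        rw [Matrix.transpose_sub, Matrix.transpose_smul, Matrix.transpose_one]
      rw [this, Matrix.det_transpose] at h2
      exact h2
  ext i j
  have := congrFun (congrFun key i) j
  simpa [Matrix.map_apply] using this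

lemma fromCols_add {R : Type*} [AddCommMonoid R] {m n₁ n₂ : Type*}
    (A₁ C₁ : Matrix m n₁ R) (A₂ C₂ : Matrix m n₂ R) :
    fromCols A₁ A₂ + fromCols C₁ C₂ = fromCols (A₁ + C₁) (A₂ + C₂) := by
  ext i (j | j) <;> simp [Matrix.fromCols]



open Matrix

/-- no-spillover part of the main eigenvalue embedding theorem:
under the hypotheses of the EEP-PS (original pencil `λM + K` with
`M = diag(Mu,0)`, eigen-equation for `[X₁ X₂]` with eigenvalue blocks
`Λ₁, Λ₃` (and the infinite part), disjoint spectra, `Γ₁ = X₁ᵤᵀ Mu X₁ᵤ`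
invertible, new eigenvalue block `Λ̃₁`, parameters `Θ` and `Γ̃₁` with
`Γ̃₁ᵀ = Γ̃₁` and `Γ̃₁ Λ̃₁⁻¹ = Λ̃₁⁻ᵀ Γ̃₁`, and well-definedness of the updates),
the updated matrices
`M̃ᵤ = (Mu⁻¹ − X₁ᵤΓ₁⁻¹X₁ᵤᵀ + X₁ᵤΘΓ̃₁⁻¹ΘᵀX₁ᵤᵀ)⁻¹` and
`K̃ = (K⁻¹ + X₁Λ₁Γ₁⁻¹X₁ᵀ − X₁ΘΛ̃₁Γ̃₁⁻¹ΘᵀX₁ᵀ)⁻¹`, `M̃ = diag(M̃ᵤ, 0)`, satisfy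
`M̃ X₂ + K̃ X₂ diag(Λ₃⁻¹, 0) = 0`: the remaining `n − p` eigenvalues (including
the infinite ones) and eigenvectors `X₂` are preserved unchanged. -/
theorem eigenvalue_embedding_no_spillover (nu nφ p : ℕ) (hp : p ≤ nu)
    (Mu : Matrix (Fin nu) (Fin nu) ℝ) (hMuSymm : Muᵀ = Mu) (hMuUnit : IsUnit Mu)
    (M : Matrix (Fin nu ⊕ Fin nφ) (Fin nu ⊕ Fin nφ) ℝ)
    (hM : M = fromBlocks Mu 0 0 0)
    (K : Matrix (Fin nu ⊕ Fin nφ) (Fin nu ⊕ Fin nφ) ℝ)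
    (hKSymm : Kᵀ = K) (hKUnit : IsUnit K)
    (X₁ : Matrix (Fin nu ⊕ Fin nφ) (Fin p) ℝ)
    (X₂ : Matrix (Fin nu ⊕ Fin nφ) (Fin (nu - p) ⊕ Fin nφ) ℝ)
    (hXinv : ∃ B : Matrix (Fin p ⊕ (Fin (nu - p) ⊕ Fin nφ)) (Fin nu ⊕ Fin nφ) ℝ,
      fromCols X₁ X₂ * B = 1 ∧ B * fromCols X₁ X₂ = 1)
    (X1u : Matrix (Fin nu) (Fin p) ℝ) (X1φ : Matrix (Fin nφ) (Fin p) ℝ)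
    (hX₁ : X₁ = fromRows X1u X1φ)
    (Λ₁ : Matrix (Fin p) (Fin p) ℝ) (hΛ₁Unit : IsUnit Λ₁)
    (Λ₃ : Matrix (Fin (nu - p)) (Fin (nu - p)) ℝ) (hΛ₃Unit : IsUnit Λ₃)
    (hdisj : ¬ ∃ μ : ℂ,
      (Λ₁.map (Complex.ofReal) - μ • 1).det = 0 ∧
      (Λ₃.map (Complex.ofReal) - μ • 1).det = 0)
    (heig : M * fromCols X₁ X₂ +
      K * fromCols X₁ X₂ *
        fromBlocks Λ₁⁻¹ 0 0
          (fromBlocks Λ₃⁻¹ 0 0 (0 : Matrix (Fin nφ) (Fin nφ) ℝ)) = 0)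
    (Γ₁ : Matrix (Fin p) (Fin p) ℝ) (hΓ₁ : Γ₁ = X1uᵀ * Mu * X1u)
    (hΓ₁Unit : IsUnit Γ₁)
    (Λt₁ : Matrix (Fin p) (Fin p) ℝ) (hΛt₁Unit : IsUnit Λt₁)
    (Θ : Matrix (Fin p) (Fin p) ℝ) (hΘUnit : IsUnit Θ)
    (Γt₁ : Matrix (Fin p) (Fin p) ℝ) (hΓt₁Symm : Γt₁ᵀ = Γt₁)
    (hΓt₁Unit : IsUnit Γt₁)
    (hΓt₁comm : Γt₁ * Λt₁⁻¹ = (Λt₁⁻¹)ᵀ * Γt₁)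
    (hMwell : IsUnit (Mu⁻¹ - X1u * Γ₁⁻¹ * X1uᵀ + X1u * Θ * Γt₁⁻¹ * Θᵀ * X1uᵀ))
    (hKwell : IsUnit (K⁻¹ + X₁ * Λ₁ * Γ₁⁻¹ * X₁ᵀ -
      X₁ * Θ * Λt₁ * Γt₁⁻¹ * Θᵀ * X₁ᵀ)) :
    let Mtu := (Mu⁻¹ - X1u * Γ₁⁻¹ * X1uᵀ + X1u * Θ * Γt₁⁻¹ * Θᵀ * X1uᵀ)⁻¹
    let Kt := (K⁻¹ + X₁ * Λ₁ * Γ₁⁻¹ * X₁ᵀ -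
      X₁ * Θ * Λt₁ * Γt₁⁻¹ * Θᵀ * X₁ᵀ)⁻¹
    let Mt := fromBlocks Mtu 0 0 (0 : Matrix (Fin nφ) (Fin nφ) ℝ)
    Mt * X₂ + Kt * X₂ *
      fromBlocks Λ₃⁻¹ 0 0 (0 : Matrix (Fin nφ) (Fin nφ) ℝ) = 0 := by
  intro Mtu Kt Mt
  -- abbreviations
  have hMSymm : Mᵀ = M := by rw [hM, Matrix.fromBlocks_transpose, hMuSymm]; simp
  -- split the eigen-equation into the X₁ and X₂ parts
  set D : Matrix (Fin (nu - p) ⊕ Fin nφ) (Fin (nu - p) ⊕ Fin nφ) ℝ :=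
    fromBlocks Λ₃⁻¹ 0 0 0 with hDdef
  rw [mul_fromCols, mul_fromCols, fromCols_mul_fromBlocks, fromCols_add] at heig
  have h1 : M * X₁ + K * X₁ * Λ₁⁻¹ = 0 := by
    ext i j
    have := congrFun (congrFun heig i) (Sum.inl j)
    simpa [Matrix.fromCols] using this
  have h2 : M * X₂ + K * X₂ * D = 0 := by
    ext i j
    have := congrFun (congrFun heig i) (Sum.inr j)
    simpa [Matrix.fromCols] using this
  -- orthogonality relations
  have hΛ₁det : IsUnit Λ₁.det := (Matrix.isUnit_iff_isUnit_det _).mp hΛ₁Unit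
  have hΛ₃det : IsUnit Λ₃.det := (Matrix.isUnit_iff_isUnit_det _).mp hΛ₃Unit
  set W : Matrix (Fin p) (Fin (nu - p) ⊕ Fin nφ) ℝ := X₁ᵀ * (K * X₂) with hWdef
  have hW1 : X₁ᵀ * (M * X₂) = -(W * D) := by
    have : M * X₂ = -(K * X₂ * D) := by
      rw [eq_neg_iff_add_eq_zero]; exact h2
    rw [this, Matrix.mul_neg, hWdef]; simp only [Matrix.mul_assoc]
  have hW2 : X₁ᵀ * (M * X₂) = -((Λ₁⁻¹)ᵀ * W) := by
    have h1t : X₁ᵀ * M + (Λ₁⁻¹)ᵀ * (X₁ᵀ * K) = 0 := by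
      have := congrArg Matrix.transpose h1
      rw [Matrix.transpose_add, Matrix.transpose_mul, Matrix.transpose_mul,
        Matrix.transpose_mul, hMSymm, hKSymm, Matrix.transpose_zero] at this
      exact this
    have := congrArg (fun Z => Z * X₂) h1t
    simp only [Matrix.add_mul, Matrix.zero_mul] at this
    have h' : X₁ᵀ * M * X₂ = -((Λ₁⁻¹)ᵀ * (X₁ᵀ * K) * X₂) := by
      rw [eq_neg_iff_add_eq_zero, ← this]
    rw [← Matrix.mul_assoc, h', hWdef]
    simp only [Matrix.mul_assoc]
  have hsyl : W = Λ₁ᵀ * (W * D) := by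
    have h3 : (Λ₁⁻¹)ᵀ * W = W * D := by
      have := hW1.symm.trans hW2
      have := neg_injective this
      rw [this]
    calc W = (Λ₁ᵀ * (Λ₁⁻¹)ᵀ) * W := by
            rw [← Matrix.transpose_mul, Matrix.nonsing_inv_mul _ hΛ₁det,
              Matrix.transpose_one, Matrix.one_mul]
      _ = Λ₁ᵀ * ((Λ₁⁻¹)ᵀ * W) := by rw [Matrix.mul_assoc]
      _ = Λ₁ᵀ * (W * D) := by rw [h3]
  -- decompose W into its two column blocks
  have hWc : W = fromCols W.toCols₁ W.toCols₂ := (fromCols_toCols W).symm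
  have hWD : W * D = fromCols (W.toCols₁ * Λ₃⁻¹) 0 := by
    rw [hWc, hDdef, fromCols_mul_fromBlocks]
    simp
  have hsyl2 : fromCols W.toCols₁ W.toCols₂ =
      fromCols (Λ₁ᵀ * (W.toCols₁ * Λ₃⁻¹)) 0 := by
    conv_lhs => rw [← hWc, hsyl, hWD]
    rw [mul_fromCols, Matrix.mul_zero]
  rw [fromCols_ext_iff] at hsyl2
  obtain ⟨hsylW1, hW20⟩ := hsyl2
  -- Sylvester equation for the first block
  have hsylT : Λ₃ᵀ * (W.toCols₁)ᵀ = (W.toCols₁)ᵀ * Λ₁ := by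
    have hA : W.toCols₁ * Λ₃ = Λ₁ᵀ * W.toCols₁ := by
      calc W.toCols₁ * Λ₃ = (Λ₁ᵀ * (W.toCols₁ * Λ₃⁻¹)) * Λ₃ := by rw [← hsylW1]
        _ = Λ₁ᵀ * (W.toCols₁ * (Λ₃⁻¹ * Λ₃)) := by
            rw [Matrix.mul_assoc, Matrix.mul_assoc]
        _ = Λ₁ᵀ * W.toCols₁ := by
            rw [Matrix.nonsing_inv_mul _ hΛ₃det, Matrix.mul_one]
    have := congrArg Matrix.transpose hA
    rw [Matrix.transpose_mul, Matrix.transpose_mul, Matrix.transpose_transpose] at this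
    exact this
  have hW10 : W.toCols₁ = 0 := by
    have := sylvester_zero_real Λ₁ Λ₃ hdisj (W.toCols₁)ᵀ hsylT
    have := congrArg Matrix.transpose this
    rwa [Matrix.transpose_transpose, Matrix.transpose_zero] at this
  have hW0 : W = 0 := by rw [hWc, hW10, hW20, fromCols_zero]
  -- consequences: X₁ᵀ K X₂ = 0 and X₁ᵀ M X₂ = 0
  have hKX : X₁ᵀ * (K * X₂) = 0 := hW0
  have hMX : X₁ᵀ * (M * X₂) = 0 := by rw [hW2, hW0, Matrix.mul_zero, neg_zero]
  -- block form of X₂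
  set X2u := X₂.toRows₁ with hX2u
  set X2φ := X₂.toRows₂ with hX2φ
  have hX₂ : X₂ = fromRows X2u X2φ := (fromRows_toRows X₂).symm
  have hMX₂ : M * X₂ = fromRows (Mu * X2u) 0 := by
    rw [hM, hX₂, fromBlocks_mul_fromRows]
    simp
  have hMu0 : X1uᵀ * (Mu * X2u) = 0 := by
    have : X₁ᵀ * (M * X₂) = X1uᵀ * (Mu * X2u) := by
      rw [hMX₂, hX₁, transpose_fromRows, fromCols_mul_fromRows]
      simp
    rw [← this, hMX]
  -- the M̃ part
  have hMudet : IsUnit Mu.det := (Matrix.isUnit_iff_isUnit_det _).mp hMuUnit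
  set E : Matrix (Fin nu) (Fin nu) ℝ :=
    Mu⁻¹ - X1u * Γ₁⁻¹ * X1uᵀ + X1u * Θ * Γt₁⁻¹ * Θᵀ * X1uᵀ with hEdef
  have hEdet : IsUnit E.det := (Matrix.isUnit_iff_isUnit_det _).mp hMwell
  have hE : E * (Mu * X2u) = X2u := by
    rw [hEdef]
    simp only [Matrix.sub_mul, Matrix.add_mul, Matrix.mul_assoc, hMu0, Matrix.mul_zero,
      Matrix.nonsing_inv_mul_cancel_left _ _ hMudet]
    simp
  have hMtu : Mtu * X2u = Mu * X2u := by
    show E⁻¹ * X2u = Mu * X2u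
    conv_lhs => rw [← hE]
    rw [Matrix.nonsing_inv_mul_cancel_left _ _ hEdet]
  have hMt : Mt * X₂ = M * X₂ := by
    show fromBlocks Mtu 0 0 0 * X₂ = M * X₂
    rw [hMX₂, hX₂, fromBlocks_mul_fromRows, hMtu]
    simp
  -- the K̃ part
  have hKdet : IsUnit K.det := (Matrix.isUnit_iff_isUnit_det _).mp hKUnit
  set F : Matrix (Fin nu ⊕ Fin nφ) (Fin nu ⊕ Fin nφ) ℝ :=
    K⁻¹ + X₁ * Λ₁ * Γ₁⁻¹ * X₁ᵀ - X₁ * Θ * Λt₁ * Γt₁⁻¹ * Θᵀ * X₁ᵀ with hFdef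
  have hFdet : IsUnit F.det := (Matrix.isUnit_iff_isUnit_det _).mp hKwell
  have hF : F * (K * X₂) = X₂ := by
    rw [hFdef]
    simp only [Matrix.sub_mul, Matrix.add_mul, Matrix.mul_assoc, hKX, Matrix.mul_zero,
      Matrix.nonsing_inv_mul_cancel_left _ _ hKdet]
    simp
  have hKt : Kt * X₂ = K * X₂ := by
    show F⁻¹ * X₂ = K * X₂
    conv_lhs => rw [← hF]
    rw [Matrix.nonsing_inv_mul_cancel_left _ _ hFdet]
  rw [hMt, hKt]
  exact h2
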